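/- Let G be cellularly embedded in a closed orientable surface Σ of genus g with dual graph G*. Then LV_{G*,Σ}(x, y, z) = z^{2g} · LV_{G,Σ}(y, x, z^{−1}), i.e. the Las Vergnas polynomial satisfies this duality relation. -/

import Mathlib

open Finset

/-- Duality: Let `G` be cellularly embedded in a closed
orientable surface `Σ` of genus `g` with dual graph `G*`.  Then
`LV_{G*,Σ}(x, y, z) = z^{2g} · LV_{G,Σ}(y, x, z⁻¹)`.

Formalization: `LV_{G,Σ}` is the Tutte polynomial of the matroid perspective
`B(G*) → C(G)` and `LV_{G*,Σ}` that of `B(G) → C(G*)` (since `(G*)* = G`),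
on the common edge set `E`.  `v` and `f` are the numbers of vertices and faces
of `G` (so `G*` has `f` vertices and `v` faces), `cG H` (resp. `cGd H`) the
number of components of the spanning subgraph of `G` (resp. `G*`) with edge set
`H`, `cS` the number of components of `Σ`.  The cellular embedding provides
`cG(E) = cGd(E) = c(Σ)`, `cGd(∅) = f`, `cG(∅) = v`, and Euler's formula. -/
theorem lasVergnas_duality {E : Type*} [Fintype E] [DecidableEq E]
    {K : Type*} [Field K]
    (v f cS g : ℕ) (cG cGd : Finset E → ℕ)
    (hcG_univ : cG Finset.univ = cS)
    (hcGd_univ : cGd Finset.univ = cS)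
    (hcGd_empty : cGd ∅ = f)
    (hcG_empty : cG ∅ = v)
    (heuler : (v : ℤ) - (Fintype.card E : ℤ) + (f : ℤ) = 2 * (cS : ℤ) - 2 * (g : ℤ)) :
    -- ranks for the perspective B(G*) → C(G):
    let rM' : Finset E → ℤ := fun H => (v : ℤ) - (cG H : ℤ)
    let rM : Finset E → ℤ := fun H =>
      (H.card : ℤ) + ((f : ℤ) - (cGd Hᶜ : ℤ)) - ((f : ℤ) - (cGd Finset.univ : ℤ))
    -- ranks for the perspective B(G) → C(G*):
    let rMd' : Finset E → ℤ := fun H => (f : ℤ) - (cGd H : ℤ)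
    let rMd : Finset E → ℤ := fun H =>
      (H.card : ℤ) + ((v : ℤ) - (cG Hᶜ : ℤ)) - ((v : ℤ) - (cG Finset.univ : ℤ))
    -- the Las Vergnas polynomials of G and of G*:
    let LV : K → K → K → K := fun x y z => ∑ H : Finset E,
      (x - 1) ^ (rM' Finset.univ - rM' H) *
      (y - 1) ^ ((H.card : ℤ) - rM H) *
      z ^ ((rM Finset.univ - rM H) - (rM' Finset.univ - rM' H))
    let LVd : K → K → K → K := fun x y z => ∑ H : Finset E,
      (x - 1) ^ (rMd' Finset.univ - rMd' H) *
      (y - 1) ^ ((H.card : ℤ) - rMd H) *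
      z ^ ((rMd Finset.univ - rMd H) - (rMd' Finset.univ - rMd' H))
    ∀ x y z : K, z ≠ 0 →
      LVd x y z = z ^ (2 * g : ℕ) * LV y x z⁻¹ := by

  intro rM' rM rMd' rMd LV LVd x y z hz
  simp only [LV, LVd, rM, rM', rMd, rMd']
  rw [Finset.mul_sum]
  refine Fintype.sum_equiv (Function.Involutive.toPerm (fun H : Finset E => Hᶜ)
    compl_involutive) _ _ fun H => ?_
  simp only [Function.Involutive.coe_toPerm, compl_compl]
  have hcard : ((Hᶜ.card : ℤ)) = (Fintype.card E : ℤ) - H.card := by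
    rw [Finset.card_compl]
    have := Finset.card_le_univ H
    push_cast [Finset.card_univ]
    omega
  rw [inv_zpow, ← zpow_neg, ← zpow_natCast z (2 * g)]
  have e1 : ((f:ℤ) - cGd Finset.univ) - ((f:ℤ) - cGd H)
      = ((Hᶜ.card : ℤ)) - ((Hᶜ.card : ℤ) + ((f:ℤ) - cGd H) - ((f:ℤ) - cGd Finset.univ)) := by
    ring
  have e2 : ((H.card : ℤ)) - ((H.card : ℤ) + ((v:ℤ) - cG Hᶜ) - ((v:ℤ) - cG Finset.univ))
      = ((v:ℤ) - cG Finset.univ) - ((v:ℤ) - cG Hᶜ) := by ring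
  have e3 : ((((Finset.univ : Finset E).card : ℤ) + ((v:ℤ) - cG (Finset.univ : Finset E)ᶜ) - ((v:ℤ) - cG Finset.univ)
        - ((H.card : ℤ) + ((v:ℤ) - cG Hᶜ) - ((v:ℤ) - cG Finset.univ)))
      - (((f:ℤ) - cGd Finset.univ) - ((f:ℤ) - cGd H)))
      = ((2 * g : ℕ) : ℤ) + -(((((Finset.univ : Finset E).card : ℤ) + ((f:ℤ) - cGd (Finset.univ : Finset E)ᶜ) - ((f:ℤ) - cGd Finset.univ)
          - ((Hᶜ.card : ℤ) + ((f:ℤ) - cGd H) - ((f:ℤ) - cGd Finset.univ)))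
        - (((v:ℤ) - cG Finset.univ) - ((v:ℤ) - cG Hᶜ)))) := by
    simp only [compl_univ, hcGd_empty, hcG_empty, hcG_univ, hcGd_univ, Finset.card_univ]
    push_cast
    omega
  rw [e3, zpow_add₀ hz, e1, e2]
  ring
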